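/- Let A be a finitely generated ℂ-algebra which is an integral domain, with fraction field K, let g ∈ A be nonzero, n ≥ 1, and let I be the ideal of A generated by b₀ = gⁿ, b₁, …, b_s. Let A' = A[I/gⁿ] ⊆ K and suppose that in A' the radical of the principal ideal generated by g equals the principal ideal generated by g. Let A₁ = A[√I/g] ⊆ K (which is contained in A'), and let K₁ be the ideal of A₁ generated by g^{n-1} and the elements b₁/g, …, b_s/g (which lie in A₁ since each b_i ∈ √I). Then A' = A₁[K₁/g^{n-1}], i.e. the A₁-subalgebra of K generated by the fractions c/g^{n-1} with c ∈ K₁ equals A'; in other words the inclusion A₁ ⊆ A' is an affine modification with locus (K₁, g^{n-1}). -/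
import Mathlib


/-- The affine modification `B[J/g]` of a domain `B` inside a field `K` containing `B`:
the `B`-subalgebra of `K` generated by the fractions `b/g` with `b ∈ J`. -/
def affineModification (B K : Type*) [CommRing B] [Field K] [Algebra B K]
    (J : Ideal B) (g : B) : Subalgebra B K :=
  Algebra.adjoin B ((fun b => algebraMap B K b / algebraMap B K g) '' (J : Set B))

/-- **Corollary 2.1**: let `A` be a finitely generated `ℂ`-algebra domain with fraction
field `K`, let `I = (gⁿ, b₁, …, b_s)`, `A' = A[I/gⁿ]`, and suppose the radical of `gA'`
equals `gA'`.  Let `A₁ = A[√I/g] ⊆ A'` and let `K₁` be the ideal of `A₁` generated by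
`g^{n-1}` and `b₁/g, …, b_s/g`.  Then `A' = A₁[K₁/g^{n-1}]`, i.e. `A₁ ⊆ A'` is an affine
modification with locus `(K₁, g^{n-1})`. -/
theorem stmt5 (A K : Type*) [CommRing A] [IsDomain A] [Algebra ℂ A]
    [Algebra.FiniteType ℂ A] [Field K] [Algebra A K] [IsFractionRing A K]
    (g : A) (hg : g ≠ 0) (n : ℕ) (hn : 1 ≤ n) (s : ℕ) (b : Fin s → A)
    (I : Ideal A) (hI : I = Ideal.span (insert (g ^ n) (Set.range b)))
    (g' : ↥(affineModification A K I (g ^ n))) (hg' : (g' : K) = algebraMap A K g)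
    (hE : (Ideal.span {g'}).radical = Ideal.span {g'}) :
    (affineModification (↥(affineModification A K I.radical g)) K
        (Ideal.span ({x : ↥(affineModification A K I.radical g) |
            (x : K) = algebraMap A K (g ^ (n - 1))} ∪
          {x : ↥(affineModification A K I.radical g) |
            ∃ i, (x : K) = algebraMap A K (b i) / algebraMap A K g}))
        ⟨algebraMap A K (g ^ (n - 1)), Subalgebra.algebraMap_mem _ _⟩ : Set K) =
      (affineModification A K I (g ^ n) : Set K) := by
  classical
  have hinj : Function.Injective (algebraMap A K) := IsFractionRing.injective A K
  have hgK : algebraMap A K g ≠ 0 := fun h => hg (hinj (by simpa using h))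
  have hgn : g ^ n = g * g ^ (n - 1) := by
    rw [← pow_succ']; congr 1; omega
  have hgnK : algebraMap A K (g ^ n) ≠ 0 := by
    rw [map_pow]; exact pow_ne_zero _ hgK
  have hgn1K : algebraMap A K (g ^ (n - 1)) ≠ 0 := by
    rw [map_pow]; exact pow_ne_zero _ hgK
  have hmemA' : ∀ x ∈ I, algebraMap A K x / algebraMap A K (g ^ n) ∈
      affineModification A K I (g ^ n) :=
    fun x hx => Algebra.subset_adjoin ⟨x, hx, rfl⟩
  have hbI : ∀ i, b i ∈ I := fun i => by
    rw [hI]; exact Ideal.subset_span (Set.mem_insert_of_mem _ ⟨i, rfl⟩)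
  -- images of I in A' lie in span {g'}
  have hspan : ∀ x ∈ I,
      algebraMap A (affineModification A K I (g ^ n)) x ∈ Ideal.span {g'} := by
    intro x hx
    refine Ideal.mem_span_singleton'.mpr
      ⟨g' ^ (n - 1) * ⟨algebraMap A K x / algebraMap A K (g ^ n), hmemA' x hx⟩,
        Subtype.ext ?_⟩
    push_cast [hg']
    rw [mul_comm ((algebraMap A K g) ^ (n - 1)), mul_assoc, ← pow_succ,
      show n - 1 + 1 = n from by omega]
    exact div_mul_cancel₀ _ (pow_ne_zero _ hgK)
  -- claim 1 : A₁ ≤ A'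
  have hc1 : ∀ c ∈ I.radical,
      algebraMap A K c / algebraMap A K g ∈ affineModification A K I (g ^ n) := by
    intro c hc
    obtain ⟨m, hm⟩ := hc
    have h1 : algebraMap A (affineModification A K I (g ^ n)) c ∈ Ideal.span {g'} := by
      rw [← hE]
      exact ⟨m, by rw [← map_pow]; exact hspan _ hm⟩
    obtain ⟨d, hd⟩ := Ideal.mem_span_singleton'.mp h1
    have hd' : (d : K) * algebraMap A K g = algebraMap A K c := by
      have := congrArg (Subtype.val) hd
      push_cast [hg'] at this
      simpa using this
    have : algebraMap A K c / algebraMap A K g = (d : K) := by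
      rw [← hd', mul_div_assoc, div_self hgK, mul_one]
    rw [this]; exact d.2
  have hA1le : affineModification A K I.radical g ≤ affineModification A K I (g ^ n) := by
    apply Algebra.adjoin_le
    rintro _ ⟨c, hc, rfl⟩
    exact hc1 c hc
  have hβmem : ∀ i, algebraMap A K (b i) / algebraMap A K g ∈
      affineModification A K I.radical g :=
    fun i => Algebra.subset_adjoin ⟨b i, Ideal.le_radical (hbI i), rfl⟩
  set A₁ := affineModification A K I.radical g with hA₁def
  set G : A₁ := ⟨algebraMap A K (g ^ (n - 1)), Subalgebra.algebraMap_mem _ _⟩ with hGdef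
  set S₁ : Set A₁ := {x : A₁ | (x : K) = algebraMap A K (g ^ (n - 1))} with hS₁
  set S₂ : Set A₁ := {x : A₁ | ∃ i, (x : K) = algebraMap A K (b i) / algebraMap A K g} with hS₂
  set J : Ideal A₁ := Ideal.span (S₁ ∪ S₂) with hJ
  set L := affineModification (↥A₁) K J G with hLdef
  have halgK : ∀ y : A₁, algebraMap A₁ K y = (y : K) := fun y => rfl
  -- every generator of L lies in A'
  have hgenL : ∀ c ∈ J, (c : K) / algebraMap A K (g ^ (n - 1)) ∈
      affineModification A K I (g ^ n) := by
    intro c hc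
    refine Submodule.span_induction ?_ ?_ ?_ ?_ hc
    · rintro x (hx | ⟨i, hi⟩)
      · rw [hx, div_self hgn1K]; exact one_mem _
      · rw [hi, div_div, ← map_mul, ← hgn]
        exact hmemA' _ (hbI i)
    · simpa using (zero_mem (affineModification A K I (g ^ n)))
    · intro x y _ _ hx hy
      rw [Subalgebra.coe_add, add_div]
      exact add_mem hx hy
    · intro a x _ hx
      rw [smul_eq_mul, Subalgebra.coe_mul, mul_div_assoc]
      exact mul_mem (hA1le a.2) hx
  -- L ⊆ A'
  have hLA' : ∀ x ∈ L, x ∈ affineModification A K I (g ^ n) := by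
    intro x hx
    refine Algebra.adjoin_induction ?_ ?_ ?_ ?_ hx
    · rintro _ ⟨c, hc, rfl⟩
      exact hgenL c hc
    · intro a
      exact hA1le a.2
    · intro x y _ _ hx hy; exact add_mem hx hy
    · intro x y _ _ hx hy; exact mul_mem hx hy
  -- A' ⊆ L
  have hA'L : ∀ x ∈ affineModification A K I (g ^ n), x ∈ L := by
    have hA1L : ∀ y : K, y ∈ A₁ → y ∈ L := by
      intro y hy
      have := Subalgebra.algebraMap_mem L ⟨y, hy⟩
      rwa [halgK] at this
    intro x hx
    refine Algebra.adjoin_induction ?_ ?_ ?_ ?_ hx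
    · rintro _ ⟨x, hx', rfl⟩
      have hx2 : x ∈ Ideal.span (insert (g ^ n) (Set.range b)) := by rw [← hI]; exact hx'
      refine Submodule.span_induction ?_ ?_ ?_ ?_ hx2
      · rintro z (rfl | ⟨i, rfl⟩)
        · beta_reduce
          rw [div_self hgnK]; exact one_mem L
        · have hmem : ((⟨algebraMap A K (b i) / algebraMap A K g, hβmem i⟩ : A₁)) ∈ J :=
            Ideal.subset_span (Or.inr ⟨i, rfl⟩)
          have h1 : algebraMap A K (b i) / algebraMap A K (g ^ n) =
              (algebraMap A K (b i) / algebraMap A K g) / algebraMap A K (g ^ (n - 1)) := by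
            rw [div_div, ← map_mul, ← hgn]
          beta_reduce
          rw [h1]
          exact Algebra.subset_adjoin ⟨_, hmem, rfl⟩
      · simpa using zero_mem L
      · intro x y _ _ hx hy
        beta_reduce
        rw [map_add, add_div]
        exact add_mem hx hy
      · intro a x _ hx
        beta_reduce
        rw [smul_eq_mul, map_mul, mul_div_assoc]
        exact mul_mem (hA1L _ (Subalgebra.algebraMap_mem A₁ a)) hx
    · intro a
      exact hA1L _ (Subalgebra.algebraMap_mem A₁ a)
    · intro x y _ _ hx hy; exact add_mem hx hy
    · intro x y _ _ hx hy; exact mul_mem hx hy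
  exact Set.Subset.antisymm (fun x hx => hLA' x hx) (fun x hx => hA'L x hx)
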